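/- Mutilation commutes with latent projection: if G = p(D, V) is the latent projection of a DAG D onto observed vertices V, and A ⊆ V, then the mutilated mDAG G_Ā equals the latent projection p(D_Ā, V) of the mutilated DAG. -/

import Mathlib

/-- An mDAG: an acyclic directed graph together with an abstract simplicial complex of
bidirected faces (all faces nonempty, all singletons present, closed under nonempty subsets). -/
structure MDAG (W : Type) where
  Edge : W → W → Prop
  Faces : Set (Set W)
  acyclic : ∀ w, ¬ Relation.TransGen Edge w w
  singleton_mem : ∀ w : W, {w} ∈ Faces
  nonempty_of_mem : ∀ B ∈ Faces, B.Nonempty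
  down_closed : ∀ A B : Set W, A ⊆ B → A.Nonempty → B ∈ Faces → A ∈ Faces

/-- `projEdge Edge U a b`: there is a directed path from `a` to `b` (of length ≥ 1) with all
non-endpoint vertices in `U`.  This is the directed-edge relation of the latent projection
that projects out `U`. -/
def projEdge {W : Type} (Edge : W → W → Prop) (U : Set W) (a b : W) : Prop :=
  ∃ c, Relation.ReflTransGen (fun x y => Edge x y ∧ y ∈ U) a c ∧ Edge c b

/-- `hcc Edge Faces U S`: the vertices of `S` share a hidden common cause with respect to `U`:
there is a bidirected face `B ⊆ U ∪ S` such that every `w ∈ S` is reached from some `b ∈ B`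
by a directed path all of whose vertices lie in `U ∪ {w}`. -/
def hcc {W : Type} (Edge : W → W → Prop) (Faces : Set (Set W)) (U : Set W) (S : Set W) : Prop :=
  ∃ B ∈ Faces, B ⊆ U ∪ S ∧
    ∀ w ∈ S, ∃ b ∈ B, Relation.ReflTransGen (fun x y => Edge x y ∧ x ∈ U) b w

/-- The face complex of a DAG: only the singletons. -/
def singFaces (W : Type) : Set (Set W) := {S | ∃ w : W, S = {w}}

/-- Mutilation commutes with latent projection.  Let `D` be a DAG with vertices split into
observed `Uᶜ` and latent `U`, and let `A ⊆ Uᶜ`.  The mutilated DAG `D_Ā` has edge relation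
`fun x y => Edge x y ∧ y ∉ A`.  Then: (i) the directed edges of `p(D_Ā, Uᶜ)` are exactly the
directed edges of `p(D, Uᶜ)` not pointing into `A`; (ii) the bidirected faces of `p(D_Ā, Uᶜ)`
are exactly the sets `B' \ A` for bidirected faces `B'` of `p(D, Uᶜ)`, together with the
singletons `{a}`, `a ∈ A` — i.e. `p(D_Ā, Uᶜ) = (p(D, Uᶜ))_Ā`. -/
theorem stmt14 {W : Type} [Fintype W] (Edge : W → W → Prop)
    (hacyclic : ∀ w, ¬ Relation.TransGen Edge w w)
    (U : Set W) (A : Set W) (hA : A ⊆ Uᶜ) :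
    (∀ a b, a ∉ U → b ∉ U →
      ((projEdge Edge U a b ∧ b ∉ A) ↔ projEdge (fun x y => Edge x y ∧ y ∉ A) U a b)) ∧
    (∀ S : Set W, S ⊆ Uᶜ → S.Nonempty →
      (hcc (fun x y => Edge x y ∧ y ∉ A) (singFaces W) U S ↔
        ((∃ S' : Set W, (S' ⊆ Uᶜ ∧ hcc Edge (singFaces W) U S') ∧ S = S' \ A) ∨
          ∃ a ∈ A, S = {a}))) := by
  have hUA : ∀ {x : W}, x ∈ U → x ∉ A := fun hx hxA => hA hxA hx
  have path_restrict : ∀ {b w : W},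
      Relation.ReflTransGen (fun x y => Edge x y ∧ x ∈ U) b w → w ∉ A →
      Relation.ReflTransGen (fun x y => (Edge x y ∧ y ∉ A) ∧ x ∈ U) b w := by
    intro b w h
    induction h with
    | refl => exact fun _ => .refl
    | tail h1 h2 ih =>
        exact fun hw => .tail (ih (hUA h2.2)) ⟨⟨h2.1, hw⟩, h2.2⟩
  constructor
  · intro a b _ _
    constructor
    · rintro ⟨⟨c, hpath, hcb⟩, hbA⟩
      exact ⟨c, Relation.ReflTransGen.mono (fun x y h => ⟨⟨h.1, hUA h.2⟩, h.2⟩) _ _ hpath, hcb, hbA⟩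
    · rintro ⟨c, hpath, hcb, hbA⟩
      exact ⟨⟨c, Relation.ReflTransGen.mono (fun x y h => ⟨h.1.1, h.2⟩) _ _ hpath, hcb⟩, hbA⟩
  · intro S hSU hSne
    constructor
    · rintro ⟨B, ⟨b, rfl⟩, hbUS, hpaths⟩
      have hbUS' : b ∈ U ∪ S := hbUS rfl
      by_cases hSA : (S ∩ A).Nonempty
      · obtain ⟨a, haS, haA⟩ := hSA
        obtain ⟨b', hb', hpa⟩ := hpaths a haS
        rcases hb' with rfl
        -- b = a since last step would land in A
        have hba : b' = a := by
          rcases hpa.cases_tail with h | ⟨c, _, hstep⟩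
          · exact h.symm
          · exact absurd haA hstep.1.2
        subst hba
        right
        refine ⟨b', haA, ?_⟩
        ext w
        simp only [Set.mem_singleton_iff]
        constructor
        · intro hwS
          obtain ⟨b'', hb'', hpw⟩ := hpaths w hwS
          rcases hb'' with rfl
          rcases hpw.cases_head with h | ⟨c, hstep, _⟩
          · exact h.symm
          · exact absurd hstep.2 (hA haA)
        · intro h; subst h; exact haS
      · left
        rw [Set.not_nonempty_iff_eq_empty] at hSA
        refine ⟨S, ⟨hSU, {b}, ⟨b, rfl⟩, hbUS, ?_⟩, ?_⟩
        · intro w hw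
          obtain ⟨b', hb', hp⟩ := hpaths w hw
          exact ⟨b', hb', Relation.ReflTransGen.mono (fun x y h => ⟨h.1.1, h.2⟩) _ _ hp⟩
        · ext w
          simp only [Set.mem_diff]
          exact ⟨fun hw => ⟨hw, fun hwA => by
            have : w ∈ S ∩ A := ⟨hw, hwA⟩
            rw [hSA] at this; exact this⟩, fun h => h.1⟩
    · rintro (⟨S', ⟨hS'U, B, ⟨b, rfl⟩, hbUS', hpaths⟩, rfl⟩ | ⟨a, haA, rfl⟩)
      · have hbUS'' : b ∈ U ∪ S' := hbUS' rfl
        have hbA : b ∉ A := by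
          intro hbA
          obtain ⟨w0, hw0⟩ := hSne
          obtain ⟨b', hb', hp⟩ := hpaths w0 hw0.1
          rcases hb' with rfl
          rcases hp.cases_head with h | ⟨c, hstep, _⟩
          · exact hw0.2 (h ▸ hbA)
          · exact hUA hstep.2 hbA
        refine ⟨{b}, ⟨b, rfl⟩, ?_, ?_⟩
        · rintro x rfl
          rcases hbUS'' with h | h
          · exact Or.inl h
          · exact Or.inr ⟨h, hbA⟩
        · intro w hw
          obtain ⟨b', hb', hp⟩ := hpaths w hw.1
          rcases hb' with rfl
          exact ⟨b', rfl, path_restrict hp hw.2⟩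
      · exact ⟨{a}, ⟨a, rfl⟩, by rintro x rfl; exact Or.inr rfl,
          by rintro w rfl; exact ⟨w, rfl, .refl⟩⟩
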